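/- If $q_k$ denotes the product of the first $k$ primes and $q_k + j$ with $0 \leq j \leq q_k - 1$ satisfies $\omega(q_k + j) = k$, then $q_k + j$ is squarefree, and hence $q_k + j = q_k$ (i.e., $j = 0$) when additionally $q_k + j$ is divisible by $q_k$. -/

import Mathlib

/-- The product of the first `k` primes (the `k`-th primorial). -/
noncomputable def primorialN (k : ℕ) : ℕ := ∏ i ∈ Finset.range k, Nat.nth Nat.Prime i

lemma primorialN_le_prod (S : Finset ℕ) (hS : ∀ p ∈ S, p.Prime) :
    primorialN S.card ≤ ∏ p ∈ S, p := by
  induction S using Finset.strongInduction with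
  | _ S ih =>
    rcases S.eq_empty_or_nonempty with rfl | hne
    · simp [primorialN]
    · obtain ⟨p, hp, hmax⟩ := S.exists_max_image id hne
      have hTlt : ∀ q ∈ S.erase p, q < p := fun q hq =>
        lt_of_le_of_ne (hmax q (Finset.mem_of_mem_erase hq)) (Finset.ne_of_mem_erase hq)
      have hcard : S.card = (S.erase p).card + 1 := by
        rw [Finset.card_erase_of_mem hp]
        have := Finset.card_pos.mpr hne
        omega
      have hcount : (S.erase p).card ≤ Nat.count Nat.Prime p := by
        rw [Nat.count_eq_card_filter_range]
        apply Finset.card_le_card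
        intro q hq
        simp only [Finset.mem_filter, Finset.mem_range]
        exact ⟨hTlt q hq, hS q (Finset.mem_of_mem_erase hq)⟩
      have hnth : Nat.nth Nat.Prime (S.erase p).card ≤ p :=
        le_of_le_of_eq (Nat.nth_monotone Nat.infinite_setOf_prime hcount)
          (Nat.nth_count (hS p hp))
      have hih := ih (S.erase p) (Finset.erase_ssubset hp)
        (fun q hq => hS q (Finset.mem_of_mem_erase hq))
      calc primorialN S.card
          = primorialN (S.erase p).card * Nat.nth Nat.Prime (S.erase p).card := by
            rw [hcard, primorialN, Finset.prod_range_succ]; rfl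
        _ ≤ (∏ q ∈ S.erase p, q) * p := Nat.mul_le_mul hih hnth
        _ = ∏ q ∈ S, q := Finset.prod_erase_mul S id hp

lemma squarefree_prod_of_primes (S : Finset ℕ) (hS : ∀ p ∈ S, p.Prime) :
    Squarefree (∏ p ∈ S, p) := by
  induction S using Finset.induction with
  | empty => simp
  | @insert p s ha ih =>
    rw [Finset.prod_insert ha]
    have hp := hS p (Finset.mem_insert_self p s)
    have hcop : Nat.Coprime p (∏ q ∈ s, q) :=
      Nat.Coprime.prod_right fun q hq =>
        (Nat.coprime_primes hp (hS q (Finset.mem_insert_of_mem hq))).mpr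
          (fun h => ha (h ▸ hq))
    exact (Nat.squarefree_mul hcop).mpr
      ⟨hp.squarefree, ih fun q hq => hS q (Finset.mem_insert_of_mem hq)⟩

/-- If `0 ≤ j ≤ q_k - 1` and `ω(q_k + j) = k`, then `q_k + j` is squarefree; hence if
additionally `q_k ∣ q_k + j`, then `j = 0`. -/
theorem stmt_4 (k j : ℕ) (hj : j ≤ primorialN k - 1)
    (hω : (primorialN k + j).primeFactors.card = k) :
    Squarefree (primorialN k + j) ∧ (primorialN k ∣ primorialN k + j → j = 0) := by
  have hN1 : 1 ≤ primorialN k :=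
    Finset.one_le_prod' (fun i _ => (Nat.prime_nth_prime i).one_lt.le)
  have hpos : 0 < primorialN k + j := by omega
  have hprimes : ∀ p ∈ (primorialN k + j).primeFactors, p.Prime :=
    fun p hp => Nat.prime_of_mem_primeFactors hp
  have hrad : primorialN k ≤ ∏ p ∈ (primorialN k + j).primeFactors, p := by
    have h := primorialN_le_prod _ hprimes
    rwa [hω] at h
  constructor
  · obtain ⟨m, hm⟩ := Nat.prod_primeFactors_dvd (primorialN k + j)
    have hm0 : m ≠ 0 := by rintro rfl; omega
    rcases eq_or_ne m 1 with rfl | hm1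
    · rw [mul_one] at hm
      exact hm ▸ squarefree_prod_of_primes _ hprimes
    · exfalso
      have h2 : 2 ≤ m := by omega
      have h3 : primorialN k * 2 ≤ (∏ p ∈ (primorialN k + j).primeFactors, p) * m :=
        Nat.mul_le_mul hrad h2
      rw [← hm] at h3
      omega
  · intro hd
    have hdj : primorialN k ∣ j := (Nat.dvd_add_right dvd_rfl).mp hd
    exact Nat.eq_zero_of_dvd_of_lt hdj (by omega)
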